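/- The symmetric functional equation B(1-s)·Γ(s/2+1)·π^{-s/2} = B(s)·Γ((1-s)/2+1)·π^{-(1-s)/2} holds for all complex s where both sides are defined. -/

import Mathlib

open Complex

private lemma aux_cancel (a c l p g : ℂ) (hg : g ≠ 0) (hp : p ≠ 0) :
    a * (l / (p * g)) * (c * g) * p = a * c * l := by
  field_simp

/-- The symmetric functional equation
`B(1-s)·Γ(s/2+1)·π^{-s/2} = B(s)·Γ((1-s)/2+1)·π^{-(1-s)/2}`, where `B(s) = -s·ζ(1-s)`,
for all complex `s` where both sides are defined. -/
theorem bernoulliFunction_symmetric_functional_equation (s : ℂ) (h0 : s ≠ 0) (h1 : s ≠ 1)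
    (h2 : ∀ n : ℕ, s ≠ -2 * ((n : ℂ) + 1)) (h3 : ∀ n : ℕ, s ≠ 2 * (n : ℂ) + 3) :
    (-(1 - s) * riemannZeta (1 - (1 - s))) * Complex.Gamma (s / 2 + 1) *
        (Real.pi : ℂ) ^ (-s / 2) =
      (-s * riemannZeta (1 - s)) * Complex.Gamma ((1 - s) / 2 + 1) *
        (Real.pi : ℂ) ^ (-(1 - s) / 2) := by
  have hs1 : (1 : ℂ) - (1 - s) = s := by ring
  rw [hs1]
  have h1s : (1 : ℂ) - s ≠ 0 := sub_ne_zero.mpr (Ne.symm h1)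
  have hGs : Gamma (s / 2) ≠ 0 := by
    apply Complex.Gamma_ne_zero
    intro n
    cases n with
    | zero => simpa using (div_ne_zero h0 (two_ne_zero' ℂ))
    | succ m =>
      intro h
      apply h2 m
      field_simp at h
      rw [h]; push_cast; ring
  have hG1s : Gamma ((1 - s) / 2) ≠ 0 := by
    apply Complex.Gamma_ne_zero
    intro n
    cases n with
    | zero => simpa using (div_ne_zero h1s (two_ne_zero' ℂ))
    | succ m =>
      intro h
      apply h3 m
      field_simp at h
      push_cast at h; linear_combination -h
  have hπne : ((Real.pi : ℂ)) ≠ 0 := by exact_mod_cast Real.pi_ne_zero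
  have hπs : ((Real.pi : ℂ)) ^ (-s / 2) ≠ 0 := by
    simp [Complex.cpow_eq_zero_iff, hπne]
  have hπ1s : ((Real.pi : ℂ)) ^ (-(1 - s) / 2) ≠ 0 := by
    simp [Complex.cpow_eq_zero_iff, hπne]
  have hζs : riemannZeta s = completedRiemannZeta s /
      ((Real.pi : ℂ) ^ (-s / 2) * Gamma (s / 2)) := by
    rw [riemannZeta_def_of_ne_zero h0, Gammaℝ_def]
  have hζ1s : riemannZeta (1 - s) = completedRiemannZeta s /
      ((Real.pi : ℂ) ^ (-(1 - s) / 2) * Gamma ((1 - s) / 2)) := by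
    rw [riemannZeta_def_of_ne_zero h1s, Gammaℝ_def, completedRiemannZeta_one_sub]
  have hG1 : Gamma (s / 2 + 1) = s / 2 * Gamma (s / 2) :=
    Complex.Gamma_add_one _ (div_ne_zero h0 (two_ne_zero' ℂ))
  have hG2 : Gamma ((1 - s) / 2 + 1) = (1 - s) / 2 * Gamma ((1 - s) / 2) :=
    Complex.Gamma_add_one _ (div_ne_zero h1s (two_ne_zero' ℂ))
  rw [hζs, hζ1s, hG1, hG2]
  rw [aux_cancel _ _ _ _ _ hGs hπs, aux_cancel _ _ _ _ _ hG1s hπ1s]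
  ring
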